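/- Fix an integer N ≥ 3, a time step τ > 0, and node indices j ∈ ℤ/Nℤ. Let X^m_j ∈ ℝ² with h^m_j := X^m_j − X^m_{j−1} ≠ 0 and n^m_j := −(h^m_j)^⊥/‖h^m_j‖ where (u₁,u₂)^⊥ := (−u₂,u₁); let κ^m_j ∈ ℝ, and let X^{m+1}_j ∈ ℝ², V^{m+1}_j ∈ ℝ, κ^{m+1}_j ∈ ℝ satisfy the three fully discrete equations (E1), (E2), (E3) (stated in the context), with δX_j := X^{m+1}_j − X^m_j and h^{m+1}_j := X^{m+1}_j − X^{m+1}_{j−1}. Then the following identity holds: (1/2)∑_j ‖h^m_j‖ [ (κ^{m+1}_{j−1} − κ^m_{j−1}) κ^{m+1}_{j−1} + (κ^{m+1}_j − κ^m_j) κ^{m+1}_j ] = −(τ/2)∑_j ‖h^m_j‖ [ (V^{m+1}_{j−1})² + (V^{m+1}_j)² ] − ∑_j ( ((κ^{m+1}_{j−1})² + (κ^{m+1}_j)²)/4 ) ( h^{m+1}_j · (h^{m+1}_j − h^m_j) ) / ‖h^m_j‖. (Identity (4.5) in the proof of Theorem 4.1) -/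

import Mathlib

noncomputable section

/-- The plane `ℝ²` with the Euclidean norm. -/
abbrev E2 : Type := EuclideanSpace ℝ (Fin 2)

/-- Clockwise-rotation convention: `(u₁, u₂)^⊥ = (−u₂, u₁)`. -/
def perp (u : E2) : E2 := (WithLp.equiv 2 (Fin 2 → ℝ)).symm ![-(u 1), u 0]

/-- Identity (4.5) in the proof of Theorem 4.1: combining the three fully
discrete equations (E1)-(E3) with suitable test functions yields
`(κ^{m+1}−κ^m, κ^{m+1})_{Γ^m} = −τ(V^{m+1},V^{m+1})_{Γ^m}
   − (1/2)((κ^{m+1})² ∂ₛX^{m+1}, ∂ₛ(X^{m+1}−X^m))_{Γ^m}`. -/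
theorem fully_discrete_key_identity
    (N : ℕ) [NeZero N] (hN : 3 ≤ N) (τ : ℝ) (hτ : 0 < τ)
    (Xm Xm1 : ZMod N → E2) (Vm1 κm κm1 : ZMod N → ℝ)
    (hm hm1 δX : ZMod N → E2)
    (hmdef : ∀ j, hm j = Xm j - Xm (j-1))
    (hm1def : ∀ j, hm1 j = Xm1 j - Xm1 (j-1))
    (δXdef : ∀ j, δX j = Xm1 j - Xm j)
    (hmne : ∀ j, hm j ≠ 0)
    (n : ZMod N → E2) (ndef : ∀ j, n j = -(‖hm j‖⁻¹ • perp (hm j)))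
    (E1 : ∀ φ : ZMod N → ℝ,
      ∑ j, ‖hm j‖ * ((inner ℝ (n j) (δX (j-1)) : ℝ) * φ (j-1)
          + (inner ℝ (n j) (δX j) : ℝ) * φ j)
        = τ * ∑ j, ‖hm j‖ * (Vm1 (j-1) * φ (j-1) + Vm1 j * φ j))
    (E2 : ∀ ω : ZMod N → E2,
      (1/2) * ∑ j, ‖hm j‖ * (Vm1 (j-1) * (inner ℝ (n j) (ω (j-1)) : ℝ)
          + Vm1 j * (inner ℝ (n j) (ω j) : ℝ))
        = ∑ j, ‖hm j‖⁻¹ *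
            (inner ℝ (-(κm1 j - κm1 (j-1)) • n j
                + ((κm1 (j-1) ^ 2 + κm1 j ^ 2)/4) • hm1 j) (ω j - ω (j-1)) : ℝ))
    (E3 : ∀ ψ : ZMod N → ℝ,
      (1/2) * ∑ j, ‖hm j‖ * ((κm1 (j-1) - κm (j-1)) * ψ (j-1) + (κm1 j - κm j) * ψ j)
        = ∑ j, ‖hm j‖⁻¹ * (inner ℝ (n j) (δX j - δX (j-1)) : ℝ) * (ψ j - ψ (j-1))
          - (1/2) * ∑ j, ‖hm j‖⁻¹ * (inner ℝ (hm1 j) (δX j - δX (j-1)) : ℝ)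
              * (κm1 (j-1) * ψ (j-1) + κm1 j * ψ j))
    :
    (1/2) * ∑ j, ‖hm j‖ * ((κm1 (j-1) - κm (j-1)) * κm1 (j-1) + (κm1 j - κm j) * κm1 j)
      = -(τ/2) * ∑ j, ‖hm j‖ * (Vm1 (j-1) ^ 2 + Vm1 j ^ 2)
        - ∑ j, ((κm1 (j-1) ^ 2 + κm1 j ^ 2)/4)
            * (inner ℝ (hm1 j) (hm1 j - hm j) : ℝ) / ‖hm j‖ := by
  have hdd : ∀ j : ZMod N, δX j - δX (j-1) = hm1 j - hm j := by
    intro j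
    rw [δXdef, δXdef, hm1def, hmdef]
    abel
  have hE1 := E1 Vm1
  have hE2 := E2 δX
  have hE3 := E3 κm1
  -- Normalize E1 RHS to squares
  have e1r : (∑ j : ZMod N, ‖hm j‖ * (Vm1 (j-1) * Vm1 (j-1) + Vm1 j * Vm1 j))
      = ∑ j : ZMod N, ‖hm j‖ * (Vm1 (j-1) ^ 2 + Vm1 j ^ 2) := by
    refine Finset.sum_congr rfl fun j _ => ?_
    ring
  rw [e1r] at hE1
  -- Normalize E1 LHS and E2 LHS to the same sum SVn
  have e1l : (∑ j : ZMod N, ‖hm j‖ * ((inner ℝ (n j) (δX (j-1)) : ℝ) * Vm1 (j-1)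
        + (inner ℝ (n j) (δX j) : ℝ) * Vm1 j))
      = ∑ j : ZMod N, ‖hm j‖ * (Vm1 (j-1) * (inner ℝ (n j) (δX (j-1)) : ℝ)
        + Vm1 j * (inner ℝ (n j) (δX j) : ℝ)) := by
    refine Finset.sum_congr rfl fun j _ => ?_
    ring
  rw [e1l] at hE1
  -- Expand E2 RHS
  have e2r : (∑ j : ZMod N, ‖hm j‖⁻¹ *
        (inner ℝ (-(κm1 j - κm1 (j-1)) • n j
            + ((κm1 (j-1) ^ 2 + κm1 j ^ 2)/4) • hm1 j) (δX j - δX (j-1)) : ℝ))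
      = (∑ j : ZMod N, -(‖hm j‖⁻¹ * (inner ℝ (n j) (hm1 j - hm j) : ℝ) * (κm1 j - κm1 (j-1))))
        + ∑ j : ZMod N, ‖hm j‖⁻¹ * ((κm1 (j-1) ^ 2 + κm1 j ^ 2)/4)
            * (inner ℝ (hm1 j) (hm1 j - hm j) : ℝ) := by
    rw [← Finset.sum_add_distrib]
    refine Finset.sum_congr rfl fun j _ => ?_
    rw [hdd j, inner_add_left, real_inner_smul_left, real_inner_smul_left]
    ring
  rw [e2r] at hE2
  -- Normalize E3 RHS
  have e3a : (∑ j : ZMod N, ‖hm j‖⁻¹ * (inner ℝ (n j) (δX j - δX (j-1)) : ℝ)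
        * (κm1 j - κm1 (j-1)))
      = ∑ j : ZMod N, ‖hm j‖⁻¹ * (inner ℝ (n j) (hm1 j - hm j) : ℝ) * (κm1 j - κm1 (j-1)) := by
    refine Finset.sum_congr rfl fun j _ => ?_
    rw [hdd j]
  rw [e3a] at hE3
  have e3b : (∑ j : ZMod N, ‖hm j‖⁻¹ * (inner ℝ (hm1 j) (δX j - δX (j-1)) : ℝ)
        * (κm1 (j-1) * κm1 (j-1) + κm1 j * κm1 j))
      = 4 * ∑ j : ZMod N, ‖hm j‖⁻¹ * ((κm1 (j-1) ^ 2 + κm1 j ^ 2)/4)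
          * (inner ℝ (hm1 j) (hm1 j - hm j) : ℝ) := by
    rw [Finset.mul_sum]
    refine Finset.sum_congr rfl fun j _ => ?_
    rw [hdd j]
    ring
  rw [e3b] at hE3
  -- Normalize the goal's last sum
  have eg : (∑ j : ZMod N, ((κm1 (j-1) ^ 2 + κm1 j ^ 2)/4)
        * (inner ℝ (hm1 j) (hm1 j - hm j) : ℝ) / ‖hm j‖)
      = ∑ j : ZMod N, ‖hm j‖⁻¹ * ((κm1 (j-1) ^ 2 + κm1 j ^ 2)/4)
          * (inner ℝ (hm1 j) (hm1 j - hm j) : ℝ) := by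
    refine Finset.sum_congr rfl fun j _ => ?_
    rw [div_eq_mul_inv]
    ring
  rw [eg]
  -- Combine
  rw [Finset.sum_neg_distrib] at hE2
  linarith [hE1, hE2, hE3]
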